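/- Let 1 < p < ∞, v a weight with N := sup_n v_{n+1}/v_n < ∞, and r, s nonzero reals with |r| + N|s| ≤ 1. Then B(r,s) is power bounded on l_p(v), and since l_p(v) is reflexive, B(r,s) is mean ergodic on l_p(v). -/

import Mathlib

set_option maxHeartbeats 1000000


open scoped ENNReal
open Filter

/-- Coordinates of a finite sum of `lp.single`s. -/
lemma aux_coord_sum (p : ℝ≥0∞) [Fact (1 ≤ p)] (c : ℕ → ℂ) (s : Finset ℕ) (n : ℕ) :
    (↑(∑ j ∈ s, lp.single p j (c j)) : ℕ → ℂ) n = if n ∈ s then c n else 0 := by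
  simp only [lp.coeFn_sum, Finset.sum_apply, lp.single_apply, Finset.sum_dite_eq, Pi.single_apply,
    Finset.sum_ite_eq, Finset.sum_ite_eq']

/-- lp norm bound for a "shifted" comparison. -/
lemma aux_shift_norm (p : ℝ≥0∞) [Fact (1 ≤ p)] (hq : 0 < p.toReal)
    (c : ℝ) (hc : 0 ≤ c) (x g : lp (fun _ : ℕ => ℂ) p)
    (h0 : (g : ℕ → ℂ) 0 = 0)
    (h : ∀ n, ‖(g : ℕ → ℂ) (n + 1)‖ ≤ c * ‖(x : ℕ → ℂ) n‖) :
    ‖g‖ ≤ c * ‖x‖ := by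
  have hxs : Summable (fun i => ‖(x : ℕ → ℂ) i‖ ^ p.toReal) := (lp.memℓp x).summable hq
  have hgs : Summable (fun i => ‖(g : ℕ → ℂ) i‖ ^ p.toReal) := (lp.memℓp g).summable hq
  refine lp.norm_le_of_tsum_le hq (mul_nonneg hc (norm_nonneg _)) ?_
  have h1 : ∑' i, ‖(g : ℕ → ℂ) i‖ ^ p.toReal
      = ∑' i, ‖(g : ℕ → ℂ) (i + 1)‖ ^ p.toReal := by
    rw [Summable.tsum_eq_zero_add hgs, h0]
    simp [Real.zero_rpow hq.ne']
  have hdom : ∀ i, ‖(g : ℕ → ℂ) (i+1)‖ ^ p.toReal ≤ c ^ p.toReal * ‖(x : ℕ → ℂ) i‖ ^ p.toReal := by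
    intro i
    rw [← Real.mul_rpow hc (norm_nonneg _)]
    exact Real.rpow_le_rpow (norm_nonneg _) (h i) hq.le
  have h2 : ∑' i, ‖(g : ℕ → ℂ) (i + 1)‖ ^ p.toReal
      ≤ c ^ p.toReal * ∑' i, ‖(x : ℕ → ℂ) i‖ ^ p.toReal := by
    rw [← tsum_mul_left]
    exact Summable.tsum_le_tsum hdom (hgs.comp_injective Nat.succ_injective) (hxs.mul_left _)
  calc ∑' i, ‖(g : ℕ → ℂ) i‖ ^ p.toReal ≤ c ^ p.toReal * ∑' i, ‖(x : ℕ → ℂ) i‖ ^ p.toReal := by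
        rw [h1]; exact h2
  _ = (c * ‖x‖) ^ p.toReal := by
        rw [← lp.norm_rpow_eq_tsum hq, Real.mul_rpow hc (norm_nonneg _)]

/-- lp norm bound for a finitely supported element with uniformly bounded coordinates. -/
lemma aux_fin_norm (p : ℝ≥0∞) [Fact (1 ≤ p)] (hq : 0 < p.toReal)
    (f : lp (fun _ : ℕ => ℂ) p) (s : Finset ℕ) (b : ℝ) (hb : 0 ≤ b)
    (h0 : ∀ n ∉ s, (f : ℕ → ℂ) n = 0) (hbd : ∀ n, ‖(f : ℕ → ℂ) n‖ ≤ b) :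
    ‖f‖ ≤ (s.card : ℝ) ^ (1 / p.toReal) * b := by
  have hcard : (0:ℝ) ≤ (s.card : ℝ) ^ (1 / p.toReal) := Real.rpow_nonneg (by positivity) _
  refine lp.norm_le_of_tsum_le hq (mul_nonneg hcard hb) ?_
  have h1 : ∑' i, ‖(f : ℕ → ℂ) i‖ ^ p.toReal = ∑ i ∈ s, ‖(f : ℕ → ℂ) i‖ ^ p.toReal := by
    refine tsum_eq_sum ?_
    intro i hi
    rw [h0 i hi, norm_zero, Real.zero_rpow hq.ne']
  have h2 : ∑ i ∈ s, ‖(f : ℕ → ℂ) i‖ ^ p.toReal ≤ (s.card : ℝ) * b ^ p.toReal := by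
    have := Finset.sum_le_card_nsmul s (fun i => ‖(f : ℕ → ℂ) i‖ ^ p.toReal) (b ^ p.toReal)
      (fun i _ => Real.rpow_le_rpow (norm_nonneg _) (hbd i) hq.le)
    simpa [nsmul_eq_mul] using this
  rw [h1]
  calc ∑ i ∈ s, ‖(f : ℕ → ℂ) i‖ ^ p.toReal ≤ (s.card : ℝ) * b ^ p.toReal := h2
  _ = ((s.card : ℝ) ^ (1 / p.toReal) * b) ^ p.toReal := by
      rw [Real.mul_rpow hcard hb, ← Real.rpow_mul (by positivity),
        one_div, inv_mul_cancel₀ hq.ne', Real.rpow_one]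

/-- For `1 < p < ∞`, a weight `v` with `N := sup_n v_{n+1}/v_n < ∞` and
nonzero reals `r, s` with `|r| + N|s| ≤ 1`, the operator `B(r,s)` is power bounded on
`l_p(v)` and, `l_p(v)` being reflexive, mean ergodic on `l_p(v)`.  As before, `B(r,s)` on
`l_p(v)` is represented via the isometric isomorphism `T_v` by the conjugated operator `T`
on `l_p` with matrix `r` on the diagonal and `s v_{n+1}/v_n` on the subdiagonal. -/
theorem stmt12 (p : ℝ≥0∞) [Fact (1 ≤ p)] (hp1 : 1 < p) (hpt : p ≠ ⊤)
    (v : ℕ → ℝ) (hv : ∀ n, 0 < v n)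
    (N : ℝ) (hN : IsLUB (Set.range fun n => v (n + 1) / v n) N)
    (r s : ℝ) (hr : r ≠ 0) (hs : s ≠ 0) (hrs : |r| + N * |s| ≤ 1)
    (T : lp (fun _ : ℕ => ℂ) p →L[ℂ] lp (fun _ : ℕ => ℂ) p)
    (hT : ∀ x : lp (fun _ : ℕ => ℂ) p,
      (T x : ∀ _ : ℕ, ℂ) 0 = (r : ℂ) * (x : ∀ _ : ℕ, ℂ) 0 ∧
      ∀ n : ℕ, (T x : ∀ _ : ℕ, ℂ) (n + 1)
        = ((s * (v (n + 1) / v n) : ℝ) : ℂ) * (x : ∀ _ : ℕ, ℂ) n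
          + (r : ℂ) * (x : ∀ _ : ℕ, ℂ) (n + 1)) :
    (∃ C : ℝ, ∀ n : ℕ, ‖T ^ n‖ ≤ C) ∧
      ∃ P : lp (fun _ : ℕ => ℂ) p →L[ℂ] lp (fun _ : ℕ => ℂ) p,
        ∀ x, Tendsto (fun n : ℕ =>
          ((n : ℂ))⁻¹ • ∑ m ∈ Finset.range n, (T ^ (m + 1)) x) atTop (nhds (P x)) := by
  -- basic numerology
  have hq1 : 1 < p.toReal := by
    have := (ENNReal.toReal_lt_toReal (by simp) hpt).mpr hp1
    simpa using this
  have hq0 : 0 < p.toReal := lt_trans one_pos hq1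
  set q := p.toReal with hqdef
  set w : ℕ → ℝ := fun n => s * (v (n + 1) / v n) with hwdef
  have hub : ∀ n, v (n + 1) / v n ≤ N := fun n => hN.1 ⟨n, rfl⟩
  have hNpos : 0 < N := lt_of_lt_of_le (div_pos (hv 1) (hv 0)) (hub 0)
  have hwle : ∀ n, |w n| ≤ N * |s| := by
    intro n
    rw [hwdef, abs_mul, abs_of_pos (div_pos (hv (n+1)) (hv n)), mul_comm]
    exact mul_le_mul_of_nonneg_right (hub n) (abs_nonneg s)
  have hNs : 0 < N * |s| := mul_pos hNpos (abs_pos.mpr hs)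
  have hr1 : |r| < 1 := by linarith
  -- norm bound on T
  have hTle : ∀ x : lp (fun _ : ℕ => ℂ) p, ‖T x‖ ≤ ‖x‖ := by
    intro x
    set g : lp (fun _ : ℕ => ℂ) p := T x - (r:ℂ) • x with hgdef
    have hg0 : (g : ℕ → ℂ) 0 = 0 := by
      simp only [hgdef, lp.coeFn_sub, Pi.sub_apply, lp.coeFn_smul, Pi.smul_apply, smul_eq_mul,
        (hT x).1, sub_self]
    have hgn : ∀ n, ‖(g : ℕ → ℂ) (n+1)‖ ≤ (N*|s|) * ‖(x : ℕ → ℂ) n‖ := by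
      intro n
      have hco : (g : ℕ → ℂ) (n+1) = ((w n : ℝ) : ℂ) * (x : ℕ → ℂ) n := by
        simp only [hgdef, lp.coeFn_sub, Pi.sub_apply, lp.coeFn_smul, Pi.smul_apply, smul_eq_mul,
          (hT x).2 n, hwdef]
        ring
      rw [hco, norm_mul, Complex.norm_real, Real.norm_eq_abs]
      exact mul_le_mul_of_nonneg_right (hwle n) (norm_nonneg _)
    have hgnorm : ‖g‖ ≤ (N*|s|) * ‖x‖ := aux_shift_norm p hq0 _ hNs.le x g hg0 hgn
    have hTx : T x = (r:ℂ) • x + g := by rw [hgdef]; abel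
    calc ‖T x‖ = ‖(r:ℂ) • x + g‖ := by rw [← hTx]
    _ ≤ ‖(r:ℂ) • x‖ + ‖g‖ := norm_add_le _ _
    _ = |r| * ‖x‖ + ‖g‖ := by rw [norm_smul, Complex.norm_real, Real.norm_eq_abs]
    _ ≤ |r| * ‖x‖ + (N*|s|) * ‖x‖ := by linarith
    _ = (|r| + N*|s|) * ‖x‖ := by ring
    _ ≤ 1 * ‖x‖ := mul_le_mul_of_nonneg_right hrs (norm_nonneg _)
    _ = ‖x‖ := one_mul _
  have hTnorm : ‖T‖ ≤ 1 := ContinuousLinearMap.opNorm_le_bound T zero_le_one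
    (fun x => by simpa using hTle x)
  have hTn : ∀ n : ℕ, ‖T ^ n‖ ≤ 1 := by
    intro n
    induction n with
    | zero => rw [pow_zero]; exact ContinuousLinearMap.norm_id_le
    | succ n ih =>
      calc ‖T ^ (n+1)‖ = ‖T ^ n * T‖ := by rw [pow_succ]
      _ ≤ ‖T ^ n‖ * ‖T‖ := norm_mul_le _ _
      _ ≤ 1 * 1 := mul_le_mul ih hTnorm (norm_nonneg _) zero_le_one
      _ = 1 := one_mul 1
  have hTny : ∀ (n : ℕ) (y : lp (fun _ : ℕ => ℂ) p), ‖(T ^ n) y‖ ≤ ‖y‖ := by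
    intro n y
    calc ‖(T ^ n) y‖ ≤ ‖T ^ n‖ * ‖y‖ := (T ^ n).le_opNorm y
    _ ≤ 1 * ‖y‖ := mul_le_mul_of_nonneg_right (hTn n) (norm_nonneg y)
    _ = ‖y‖ := one_mul _
  refine ⟨⟨1, hTn⟩, 0, ?_⟩
  -- the operator A = 1 - T
  set A : lp (fun _ : ℕ => ℂ) p →L[ℂ] lp (fun _ : ℕ => ℂ) p := 1 - T with hAdef
  have hA : ∀ y, A y = y - T y := by
    intro y
    rw [hAdef]
    simp [ContinuousLinearMap.sub_apply]
  -- density of the range of A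
  have hsingle : ∀ k : ℕ, (lp.single p k (1:ℂ) : lp (fun _ : ℕ => ℂ) p)
      ∈ closure (Set.range (fun y => A y)) := by
    intro k
    -- the scalar `d = (1 - r)⁻¹` and the formal solution `u`
    have hrc : ‖(1 : ℂ) - (r:ℂ)‖ = |1 - r| := by
      rw [show (1:ℂ) - (r:ℂ) = ((1 - r : ℝ) : ℂ) by push_cast; ring, Complex.norm_real,
        Real.norm_eq_abs]
    have h1r : N * |s| ≤ ‖(1 : ℂ) - (r:ℂ)‖ := by
      rw [hrc]
      have h := abs_sub_abs_le_abs_sub (1:ℝ) r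
      rw [abs_one] at h
      linarith
    have hrpos : 0 < ‖(1 : ℂ) - (r:ℂ)‖ := lt_of_lt_of_le hNs h1r
    have hd0 : (1 : ℂ) - (r:ℂ) ≠ 0 := by
      intro h; rw [h, norm_zero] at hrpos; exact lt_irrefl 0 hrpos
    set d : ℂ := ((1 : ℂ) - (r:ℂ))⁻¹ with hddef
    have hd1 : ((1 : ℂ) - (r:ℂ)) * d = 1 := mul_inv_cancel₀ hd0
    have hdn : ‖d‖ = ‖(1 : ℂ) - (r:ℂ)‖⁻¹ := by rw [hddef, norm_inv]
    have hβ : N * |s| * ‖d‖ ≤ 1 := by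
      rw [hdn, ← div_eq_mul_inv]
      exact (div_le_one hrpos).mpr h1r
    set u : ℕ → ℂ := fun j => d * ∏ i ∈ Finset.range j, (((w (k+i) : ℝ) : ℂ) * d) with hudef
    have hu0 : u 0 = d := by simp [hudef]
    have husucc : ∀ j, u (j+1) = u j * (((w (k+j):ℝ):ℂ) * d) := by
      intro j
      simp only [hudef, Finset.prod_range_succ]
      ring
    have hukey : ∀ j, ((1:ℂ) - (r:ℂ)) * u (j+1) = ((w (k+j):ℝ):ℂ) * u j := by
      intro j
      rw [husucc]
      calc ((1:ℂ) - (r:ℂ)) * (u j * (((w (k+j):ℝ):ℂ) * d))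
          = ((w (k+j):ℝ):ℂ) * u j * (((1:ℂ) - (r:ℂ)) * d) := by ring
      _ = ((w (k+j):ℝ):ℂ) * u j := by rw [hd1, mul_one]
    have hukey0 : ((1:ℂ) - (r:ℂ)) * u 0 = 1 := by rw [hu0]; exact hd1
    have hwnorm : ∀ i, ‖((w i : ℝ) : ℂ)‖ ≤ N * |s| := by
      intro i
      rw [Complex.norm_real, Real.norm_eq_abs]
      exact hwle i
    have hubound : ∀ j, ‖u j‖ ≤ ‖d‖ := by
      intro j
      rw [hudef]
      simp only [norm_mul, norm_prod]
      have hprod : ∏ i ∈ Finset.range j, (‖((w (k+i):ℝ):ℂ)‖ * ‖d‖) ≤ 1 := by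
        refine Finset.prod_le_one (fun i _ => by positivity) (fun i _ => ?_)
        calc ‖((w (k+i):ℝ):ℂ)‖ * ‖d‖ ≤ (N * |s|) * ‖d‖ :=
              mul_le_mul_of_nonneg_right (hwnorm _) (norm_nonneg _)
        _ ≤ 1 := hβ
      calc ‖d‖ * ∏ i ∈ Finset.range j, (‖((w (k+i):ℝ):ℂ)‖ * ‖d‖) ≤ ‖d‖ * 1 :=
            mul_le_mul_of_nonneg_left hprod (norm_nonneg _)
      _ = ‖d‖ := mul_one _
    -- the approximating family
    set cc : ℕ → ℕ → ℂ := fun M n => (1 - ((n - k : ℕ) : ℂ)/(M:ℂ)) * u (n - k) with hccdef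
    set yy : ℕ → lp (fun _ : ℕ => ℂ) p :=
      fun M => ∑ j ∈ Finset.Icc k (k+M), lp.single p j (cc M j) with hyydef
    have hsc : ∀ n, ((lp.single p k (1:ℂ) : lp (fun _ : ℕ => ℂ) p) : ℕ → ℂ) n
        = if n = k then 1 else 0 := by
      intro n
      by_cases h : n = k
      · subst h; simp [lp.single_apply_self]
      · simp [lp.single_apply_ne p k _ h, h]
    -- the key estimate
    have key : ∀ M : ℕ, 1 ≤ M →
        ‖A (yy M) - lp.single p k 1‖ ≤ (M:ℝ) ^ (1/q) * (1/M) := by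
      intro M hM
      have hMC : ((M:ℂ)) ≠ 0 := by
        exact_mod_cast Nat.cast_ne_zero.mpr (by omega)
      have hMR : (0:ℝ) < (M:ℝ) := by exact_mod_cast Nat.pos_of_ne_zero (by omega)
      set Y : ℕ → ℂ := fun n => if n ∈ Finset.Icc k (k+M) then cc M n else 0 with hYdef
      have hYc : ∀ n, ((yy M : lp (fun _ : ℕ => ℂ) p) : ℕ → ℂ) n = Y n := by
        intro n
        rw [hyydef, hYdef]
        exact aux_coord_sum p (cc M) (Finset.Icc k (k+M)) n
      set E : lp (fun _ : ℕ => ℂ) p := A (yy M) - lp.single p k 1 with hEdef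
      have hEc : ∀ n, (E : ℕ → ℂ) n
          = Y n - ((T (yy M) : lp (fun _ : ℕ => ℂ) p) : ℕ → ℂ) n
            - (if n = k then 1 else 0) := by
        intro n
        rw [hEdef, hA]
        simp only [lp.coeFn_sub, Pi.sub_apply, hYc, hsc]
      have hYeval : ∀ m, Y m = if m ∈ Finset.Icc k (k+M) then cc M m else 0 := fun m => rfl
      have hcceval : ∀ m, cc M m = (1 - ((m - k : ℕ) : ℂ)/(M:ℂ)) * u (m - k) := fun m => rfl
      have hwc : ∀ m, ((s * (v (m + 1) / v m) : ℝ) : ℂ) = ((w m : ℝ) : ℂ) := fun m => rfl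
      -- coordinate formula for E
      have hEform : ∀ n, (E : ℕ → ℂ) n
          = if n ∈ Finset.Icc (k+1) (k+M)
            then -(((w (n-1) : ℝ) : ℂ) * u (n-1-k)) / (M:ℂ) else 0 := by
        have hT1 := (hT (yy M)).1
        have hT2 := (hT (yy M)).2
        rw [hYc 0] at hT1
        intro n
        rcases eq_or_ne n 0 with rfl | hn0
        · have hmem : (0:ℕ) ∉ Finset.Icc (k+1) (k+M) := by
            rw [Finset.mem_Icc]; omega
          rw [if_neg hmem, hEc 0, hT1]
          by_cases hk : k = 0
          · subst hk
            have h0 : Y 0 = u 0 := by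
              rw [hYeval, if_pos (by rw [Finset.mem_Icc]; omega), hcceval]
              norm_num
            rw [h0, if_pos rfl]
            linear_combination hukey0
          · have h0 : Y 0 = 0 := by
              rw [hYeval, if_neg (by rw [Finset.mem_Icc]; omega)]
            rw [h0, if_neg (by omega)]
            ring
        · obtain ⟨n, rfl⟩ : ∃ m, n = m + 1 := ⟨n - 1, by omega⟩
          have hT2n := hT2 n
          rw [hYc n, hYc (n+1), hwc n] at hT2n
          by_cases hmem : n+1 ∈ Finset.Icc (k+1) (k+M)
          · rw [if_pos hmem]
            rw [Finset.mem_Icc] at hmem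
            obtain ⟨h1, h2⟩ := hmem
            have hY1 : Y (n+1) = (1 - (((n+1-k:ℕ)):ℂ)/(M:ℂ)) * u (n+1-k) := by
              rw [hYeval, if_pos (by rw [Finset.mem_Icc]; omega), hcceval]
            have hY2 : Y n = (1 - (((n-k:ℕ)):ℂ)/(M:ℂ)) * u (n-k) := by
              rw [hYeval, if_pos (by rw [Finset.mem_Icc]; omega), hcceval]
            have hsplit : n+1-k = (n-k)+1 := by omega
            have hcast : (((n+1-k:ℕ)):ℂ) = (((n-k:ℕ)):ℂ) + 1 := by
              rw [hsplit]; push_cast; ring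
            have hkey : ((1:ℂ) - (r:ℂ)) * u (n+1-k) = ((w n:ℝ):ℂ) * u (n-k) := by
              rw [hsplit]
              have h := hukey (n-k)
              rwa [show k + (n-k) = n by omega] at h
            rw [hEc (n+1), hT2n, hY1, hY2, if_neg (by omega : ¬ (n+1 = k)), hcast]
            simp only [Nat.add_sub_cancel]
            linear_combination (1 - (((n-k:ℕ):ℂ) + 1)/(M:ℂ)) * hkey
          · rw [if_neg hmem, hEc (n+1), hT2n]
            rw [Finset.mem_Icc] at hmem
            by_cases hc1 : n+1 < k
            · have hY1 : Y (n+1) = 0 := by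
                rw [hYeval, if_neg (by rw [Finset.mem_Icc]; omega)]
              have hY2 : Y n = 0 := by
                rw [hYeval, if_neg (by rw [Finset.mem_Icc]; omega)]
              rw [hY1, hY2, if_neg (by omega)]
              ring
            · by_cases hc2 : n+1 = k
              · have hY1 : Y (n+1) = u 0 := by
                  rw [hYeval, if_pos (by rw [Finset.mem_Icc]; omega), hcceval,
                    show n+1-k = 0 by omega]
                  norm_num
                have hY2 : Y n = 0 := by
                  rw [hYeval, if_neg (by rw [Finset.mem_Icc]; omega)]
                rw [hY1, hY2, if_pos hc2]
                linear_combination hukey0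
              · have hc3 : k+M < n+1 := by omega
                have hY1 : Y (n+1) = 0 := by
                  rw [hYeval, if_neg (by rw [Finset.mem_Icc]; omega)]
                have hY2 : Y n = 0 := by
                  by_cases hc4 : n = k+M
                  · rw [hYeval, if_pos (by rw [Finset.mem_Icc]; omega), hcceval, hc4,
                      show k+M-k = M by omega, div_self hMC]
                    ring
                  · rw [hYeval, if_neg (by rw [Finset.mem_Icc]; omega)]
                rw [hY1, hY2, if_neg (by omega)]
                ring
      have hE0 : ∀ n ∉ Finset.Icc (k+1) (k+M), (E : ℕ → ℂ) n = 0 := by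
        intro n hn
        rw [hEform n, if_neg hn]
      have hEb : ∀ n, ‖(E : ℕ → ℂ) n‖ ≤ 1/(M:ℝ) := by
        intro n
        rw [hEform n]
        by_cases h : n ∈ Finset.Icc (k+1) (k+M)
        · rw [if_pos h, norm_div, norm_neg, norm_mul]
          have h1 : ‖((w (n-1):ℝ):ℂ)‖ * ‖u (n-1-k)‖ ≤ 1 := by
            calc ‖((w (n-1):ℝ):ℂ)‖ * ‖u (n-1-k)‖ ≤ (N * |s|) * ‖d‖ :=
                  mul_le_mul (hwnorm _) (hubound _) (norm_nonneg _) (by positivity)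
            _ ≤ 1 := hβ
          have h2 : ‖((M:ℕ):ℂ)‖ = (M:ℝ) := by
            rw [Complex.norm_natCast]
          rw [h2]
          gcongr
        · rw [if_neg h, norm_zero]
          positivity
      have hcard : ((Finset.Icc (k+1) (k+M)).card : ℝ) = (M:ℝ) := by
        rw [Nat.card_Icc]
        norm_num
      have := aux_fin_norm p hq0 E (Finset.Icc (k+1) (k+M)) (1/(M:ℝ)) (by positivity) hE0 hEb
      rw [hcard] at this
      exact this
    -- convergence of the approximations
    have htend0 : Tendsto (fun M : ℕ => (M:ℝ) ^ (1/q) * (1/M)) atTop (nhds 0) := by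
      have h1 : Tendsto (fun x : ℝ => x ^ (1/q - 1)) atTop (nhds 0) := by
        have : (0:ℝ) < 1 - 1/q := by
          have : 1/q < 1 := by
            rw [div_lt_one hq0]; exact hq1
          linarith
        have := tendsto_rpow_neg_atTop this
        convert this using 2 with x
        ring_nf
      have h2 : Tendsto (fun M : ℕ => ((M:ℝ)) ^ (1/q - 1)) atTop (nhds 0) :=
        h1.comp tendsto_natCast_atTop_atTop
      refine h2.congr' ?_
      filter_upwards [eventually_ge_atTop 1] with M hM
      have hMR : (0:ℝ) < (M:ℝ) := by exact_mod_cast Nat.pos_of_ne_zero (by omega)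
      rw [Real.rpow_sub hMR, Real.rpow_one]
      ring
    have hnormtend : Tendsto (fun M : ℕ => ‖A (yy M) - lp.single p k 1‖) atTop (nhds 0) := by
      refine squeeze_zero' (Eventually.of_forall (fun M => norm_nonneg _)) ?_ htend0
      filter_upwards [eventually_ge_atTop 1] with M hM
      exact key M hM
    have htend : Tendsto (fun M : ℕ => A (yy M)) atTop
        (nhds (lp.single p k (1:ℂ) : lp (fun _ : ℕ => ℂ) p)) := by
      rw [tendsto_iff_dist_tendsto_zero]
      simpa only [dist_eq_norm] using hnormtend
    exact mem_closure_of_tendsto htend (Eventually.of_forall (fun M => ⟨yy M, rfl⟩))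
  have hmem : ∀ x : lp (fun _ : ℕ => ℂ) p, x ∈ closure (Set.range (fun y => A y)) := by
    set R : Submodule ℂ (lp (fun _ : ℕ => ℂ) p) := LinearMap.range (A : lp (fun _ : ℕ => ℂ) p →ₗ[ℂ] lp (fun _ : ℕ => ℂ) p) with hR
    have hRset : (R : Set (lp (fun _ : ℕ => ℂ) p)) = Set.range (fun y => A y) := by
      rw [hR]; ext u; simp [LinearMap.mem_range]
    set M' := R.topologicalClosure with hM'
    have hMset : (M' : Set (lp (fun _ : ℕ => ℂ) p))
        = closure (Set.range (fun y => A y)) := by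
      rw [hM', Submodule.topologicalClosure_coe, hRset]
    have hsing : ∀ (k : ℕ) (a : ℂ), lp.single p k a ∈ M' := by
      intro k a
      have h1 : lp.single p k (1:ℂ) ∈ M' := by
        rw [← SetLike.mem_coe, hMset]; exact hsingle k
      have h2 : (lp.single p k a : lp (fun _ : ℕ => ℂ) p)
          = a • (lp.single p k (1:ℂ) : lp (fun _ : ℕ => ℂ) p) := by
        rw [← lp.single_smul (E := fun _ : ℕ => ℂ) p k a (1:ℂ), smul_eq_mul, mul_one]
      rw [h2]; exact M'.smul_mem a h1
    intro x
    rw [← hMset]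
    have hx : HasSum (fun i : ℕ => lp.single p i ((x : ℕ → ℂ) i)) x := lp.hasSum_single hpt x
    exact (Submodule.isClosed_topologicalClosure R).mem_of_tendsto hx
      (Eventually.of_forall (fun t => Submodule.sum_mem M' (fun i _ => hsing i _)))
  have hdense : ∀ x : lp (fun _ : ℕ => ℂ) p, ∀ ε > 0, ∃ y, ‖x - A y‖ < ε := by
    intro x ε hε
    have hx := hmem x
    rw [Metric.mem_closure_iff] at hx
    obtain ⟨b, hb, hdist⟩ := hx ε hε
    obtain ⟨y, rfl⟩ := hb
    exact ⟨y, by rwa [dist_eq_norm] at hdist⟩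
  -- telescoping
  have htel : ∀ (y : lp (fun _ : ℕ => ℂ) p) (n : ℕ),
      ∑ m ∈ Finset.range n, (T ^ (m + 1)) (A y) = T y - (T ^ (n + 1)) y := by
    intro y n
    have : ∀ m : ℕ, (T ^ (m + 1)) (A y) = (T ^ (m + 1)) y - (T ^ (m + 1 + 1)) y := by
      intro m
      rw [hA, map_sub, pow_succ T (m+1), ContinuousLinearMap.mul_apply]
    calc ∑ m ∈ Finset.range n, (T ^ (m + 1)) (A y)
        = ∑ m ∈ Finset.range n, ((T ^ (m + 1)) y - (T ^ (m + 1 + 1)) y) := by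
          exact Finset.sum_congr rfl (fun m _ => this m)
    _ = (T ^ (0 + 1)) y - (T ^ (n + 1)) y := Finset.sum_range_sub' (fun i => (T ^ (i + 1)) y) n
    _ = T y - (T ^ (n + 1)) y := by rw [zero_add, pow_one]
  -- final convergence
  intro x
  simp only [ContinuousLinearMap.zero_apply]
  rw [NormedAddCommGroup.tendsto_nhds_zero]
  intro ε hε
  obtain ⟨y, hy⟩ := hdense x (ε/2) (by positivity)
  set z := x - A y with hzdef
  have hxz : x = A y + z := by rw [hzdef]; abel
  have hev1 : ∀ᶠ n : ℕ in atTop, 2 * ‖y‖ / n < ε / 2 := by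
    have h0 : Tendsto (fun n : ℕ => 2 * ‖y‖ / n) atTop (nhds 0) :=
      tendsto_const_div_atTop_nhds_zero_nat (2 * ‖y‖)
    exact h0.eventually (gt_mem_nhds (by positivity))
  filter_upwards [hev1, eventually_ge_atTop 1] with n hn1 hn2
  have hnR : (1:ℝ) ≤ (n:ℝ) := by exact_mod_cast hn2
  have hnpos : (0:ℝ) < (n:ℝ) := lt_of_lt_of_le one_pos hnR
  have hsum : ∑ m ∈ Finset.range n, (T ^ (m + 1)) x
      = (T y - (T ^ (n + 1)) y) + ∑ m ∈ Finset.range n, (T ^ (m + 1)) z := by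
    rw [← htel y n, ← Finset.sum_add_distrib]
    exact Finset.sum_congr rfl (fun m _ => by rw [← map_add, ← hxz])
  have hnormn : ‖((n:ℂ))⁻¹‖ = (n:ℝ)⁻¹ := by
    rw [norm_inv, Complex.norm_natCast]
  have hb1 : ‖T y - (T ^ (n + 1)) y‖ ≤ 2 * ‖y‖ := by
    calc ‖T y - (T ^ (n + 1)) y‖ ≤ ‖T y‖ + ‖(T ^ (n + 1)) y‖ := norm_sub_le _ _
    _ ≤ ‖y‖ + ‖y‖ := add_le_add (hTle y) (hTny (n+1) y)
    _ = 2 * ‖y‖ := by ring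
  have hb2 : ‖∑ m ∈ Finset.range n, (T ^ (m + 1)) z‖ ≤ n * ‖z‖ := by
    calc ‖∑ m ∈ Finset.range n, (T ^ (m + 1)) z‖
        ≤ ∑ m ∈ Finset.range n, ‖(T ^ (m + 1)) z‖ := norm_sum_le _ _
    _ ≤ ∑ _m ∈ Finset.range n, ‖z‖ := Finset.sum_le_sum (fun m _ => hTny (m+1) z)
    _ = n * ‖z‖ := by simp [mul_comm]
  calc ‖((n:ℂ))⁻¹ • ∑ m ∈ Finset.range n, (T ^ (m + 1)) x‖
      = (n:ℝ)⁻¹ * ‖∑ m ∈ Finset.range n, (T ^ (m + 1)) x‖ := by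
        rw [norm_smul, hnormn]
  _ ≤ (n:ℝ)⁻¹ * (2 * ‖y‖ + n * ‖z‖) := by
        refine mul_le_mul_of_nonneg_left ?_ (by positivity)
        rw [hsum]
        exact le_trans (norm_add_le _ _) (add_le_add hb1 hb2)
  _ = 2 * ‖y‖ / n + ‖z‖ := by field_simp
  _ < ε / 2 + ε / 2 := by
        exact add_lt_add hn1 hy
  _ = ε := by ring
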